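/- arXiv:1507.05194 — 9 statements merged into one kernel-verified Lean document; each statement's English description precedes it below -/
import Mathlib

section
/- If there exists s' with 1 ≤ s' ≤ k such that ∑_{j=0}^{s'-1} p j < s', then N t ≤ ∑_{j=0}^{s'-1} p j for every t; in particular, if moreover ∑_{j=s'}^{k} p j > 0, then no standing ovation occurs for p. -/
/-- The applause process of an audience `p`: `N 0 = p 0` and
`N (t+1) = ∑_{j=0}^{N t} p j`. -/
def applause (p : ℕ → ℕ) : ℕ → ℕ
  | 0 => p 0
  | t + 1 => ∑ j ∈ Finset.range (applause p t + 1), p j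

/-- A standing ovation occurs for the audience `p` (supported on `[0,k]`)
iff the applause process reaches the total audience size. -/
def StandingOvation (k : ℕ) (p : ℕ → ℕ) : Prop :=
  ∃ t, applause p t = ∑ j ∈ Finset.range (k + 1), p j

/-- `p` is `s`-soluble iff for every `1 ≤ s' ≤ s`, `∑_{j=0}^{s'-1} p j ≥ s'`. -/
def Soluble (s : ℕ) (p : ℕ → ℕ) : Prop :=
  ∀ s', 1 ≤ s' → s' ≤ s → s' ≤ ∑ j ∈ Finset.range s', p j

/-- `r(p)`: the least number `n` of invited friends (with shyness levels in `[0,k]`)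
such that the augmented audience `p + q` produces a standing ovation. -/
noncomputable def ovationNumber (k : ℕ) (p : ℕ → ℕ) : ℕ :=
  sInf {n : ℕ | ∃ q : ℕ → ℕ, (∀ j, k < j → q j = 0) ∧
    (∑ j ∈ Finset.range (k + 1), q j) = n ∧
    StandingOvation k (fun j => p j + q j)}

theorem stmt_1 (k : ℕ) (p : ℕ → ℕ) (hp : ∀ j, k < j → p j = 0)
    (s' : ℕ) (hs'1 : 1 ≤ s') (hs'k : s' ≤ k)
    (hblock : ∑ j ∈ Finset.range s', p j < s') :
    (∀ t, applause p t ≤ ∑ j ∈ Finset.range s', p j) ∧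
      (0 < ∑ j ∈ Finset.Icc s' k, p j → ¬ StandingOvation k p) := by
  have hbound : ∀ t, applause p t ≤ ∑ j ∈ Finset.range s', p j := by
    intro t
    induction t with
    | zero =>
      have : p 0 ≤ ∑ j ∈ Finset.range s', p j :=
        Finset.single_le_sum (fun i _ => Nat.zero_le _) (Finset.mem_range.mpr hs'1)
      simpa [applause] using this
    | succ t ih =>
      have h1 : applause p t + 1 ≤ s' := Nat.succ_le_of_lt (lt_of_le_of_lt ih hblock)
      calc applause p (t+1) = ∑ j ∈ Finset.range (applause p t + 1), p j := rfl
        _ ≤ ∑ j ∈ Finset.range s', p j :=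
          Finset.sum_le_sum_of_subset (Finset.range_subset_range.mpr h1)
  refine ⟨hbound, fun hpos ⟨t, ht⟩ => ?_⟩
  have hsplit : ∑ j ∈ Finset.range (k+1), p j
      = (∑ j ∈ Finset.range s', p j) + ∑ j ∈ Finset.Icc s' k, p j := by
    rw [Finset.range_eq_Ico, ← Finset.Ico_add_one_right_eq_Icc,
      ← Finset.sum_Ico_consecutive _ (Nat.zero_le s') ((Nat.le_succ_of_le hs'k)),
      Finset.Ico_add_one_right_eq_Icc]
    rw [Finset.range_eq_Ico, Nat.succ_eq_add_one, Finset.Ico_add_one_right_eq_Icc]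
  have := hbound t
  omega
end

section
/- If the audience p is k-soluble and N t < ∑_{j=0}^{k} p j, then N (t+1) ≥ N t + 1 (at every stage before full ovation, at least one more spectator stands up). -/
theorem stmt_2 (k : ℕ) (p : ℕ → ℕ) (hp : ∀ j, k < j → p j = 0)
    (hsol : Soluble k p) (t : ℕ)
    (ht : applause p t < ∑ j ∈ Finset.range (k + 1), p j) :
    applause p t + 1 ≤ applause p (t + 1) := by
  show applause p t + 1 ≤ ∑ j ∈ Finset.range (applause p t + 1), p j
  by_cases h : applause p t + 1 ≤ k
  · exact hsol (applause p t + 1) (Nat.le_add_left 1 _) h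
  · have hk : k + 1 ≤ applause p t + 1 := by omega
    have heq : ∑ j ∈ Finset.range (applause p t + 1), p j
        = ∑ j ∈ Finset.range (k + 1), p j := by
      rw [← Finset.sum_range_add_sum_Ico p hk]
      have : ∑ j ∈ Finset.Ico (k + 1) (applause p t + 1), p j = 0 := by
        apply Finset.sum_eq_zero
        intro j hj
        exact hp j (by simpa using (Finset.mem_Ico.mp hj).1)
      omega
    omega
end

section
/- If the audience p is k-soluble, then N T = ∑_{j=0}^{k} p j where T = ∑_{j=0}^{k} p j; that is, a standing ovation occurs within a number of steps equal to the total audience size. -/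
theorem stmt_3 (k : ℕ) (p : ℕ → ℕ) (hp : ∀ j, k < j → p j = 0)
    (hsol : Soluble k p) :
    applause p (∑ j ∈ Finset.range (k + 1), p j) =
      ∑ j ∈ Finset.range (k + 1), p j := by
  set S := ∑ j ∈ Finset.range (k + 1), p j with hS
  have hext : ∀ m, k ≤ m → ∑ j ∈ Finset.range (m + 1), p j = S := by
    intro m hm
    rw [hS]
    refine (Finset.sum_subset (Finset.range_subset_range.2 (by omega)) ?_).symm
    intro x hx hnx
    simp only [Finset.mem_range] at hx hnx
    exact hp x (by omega)
  rcases Nat.eq_zero_or_pos k with hk | hk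
  · subst hk
    have hS0 : S = p 0 := by simp [hS]
    have h1 : ∀ t, applause p t = p 0 := by
      intro t
      induction t with
      | zero => rfl
      | succ t ih =>
        show ∑ j ∈ Finset.range (applause p t + 1), p j = p 0
        rw [ih, hext (p 0) (Nat.zero_le _), hS0]
    rw [h1, hS0]
  · have hSk : k ≤ S := by
      refine le_trans (hsol k hk le_rfl) ?_
      refine Finset.sum_le_sum_of_subset (Finset.range_subset_range.2 (by omega))
    have hgrow : ∀ t, min (t + 1) k ≤ applause p t := by
      intro t
      induction t with
      | zero =>
        have h1 : 1 ≤ ∑ j ∈ Finset.range 1, p j := hsol 1 le_rfl hk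
        simp only [Finset.sum_range_one] at h1
        show min 1 k ≤ p 0
        omega
      | succ t ih =>
        by_cases hc : k ≤ applause p t
        · have : applause p (t + 1) = S := by
            show ∑ j ∈ Finset.range (applause p t + 1), p j = S
            exact hext _ hc
          omega
        · push_neg at hc
          have h2 : applause p t + 1 ≤ ∑ j ∈ Finset.range (applause p t + 1), p j :=
            hsol _ (by omega) (by omega)
          have : applause p (t + 1) = ∑ j ∈ Finset.range (applause p t + 1), p j := rfl
          omega
    have hfix : ∀ t, k ≤ applause p t → applause p (t + 1) = S := by
      intro t h
      show ∑ j ∈ Finset.range (applause p t + 1), p j = S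
      exact hext _ h
    have hNk : applause p k = S := by
      have h := hgrow (k - 1)
      have h2 := hfix (k - 1) (by omega)
      have : k - 1 + 1 = k := by omega
      rwa [this] at h2
    have hall : ∀ t, k ≤ t → applause p t = S := by
      intro t ht
      induction t, ht using Nat.le_induction with
      | base => exact hNk
      | succ t ht ih => exact (hfix t (by omega)).trans rfl
    exact hall S hSk
end

section
/- Let s : ℕ with s + 1 ≤ k. If the audience p is s-soluble but (s+1)-insoluble, then for every s' ≤ s the audience p + δ_{s'} obtained by adding one spectator with shyness level s' (i.e., increasing p s' by 1 and leaving all other values unchanged) is (s+1)-soluble. -/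
theorem stmt_5 (k : ℕ) (p : ℕ → ℕ) (hp : ∀ j, k < j → p j = 0)
    (s : ℕ) (hsk : s + 1 ≤ k) (hsol : Soluble s p) (hins : ¬ Soluble (s + 1) p)
    (s' : ℕ) (hs' : s' ≤ s) :
    Soluble (s + 1) (fun j => p j + if j = s' then 1 else 0) := by
  intro t ht1 hts
  simp only [Finset.sum_add_distrib]
  by_cases hc : t ≤ s
  · have := hsol t ht1 hc
    omega
  · have hts1 : t = s + 1 := by omega
    subst hts1
    have h1 : s' ∈ Finset.range (s + 1) := Finset.mem_range.mpr (by omega)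
    have h2 : (∑ j ∈ Finset.range (s + 1), if j = s' then 1 else 0) = 1 := by
      rw [Finset.sum_ite_eq' (Finset.range (s + 1)) s' (fun _ => 1)]
      simp [h1]
    have h3 : s ≤ ∑ j ∈ Finset.range (s + 1), p j := by
      rcases Nat.eq_zero_or_pos s with h | h
      · omega
      · calc s ≤ ∑ j ∈ Finset.range s, p j := hsol s h le_rfl
          _ ≤ ∑ j ∈ Finset.range (s + 1), p j :=
            Finset.sum_le_sum_of_subset (Finset.range_subset_range.mpr (by omega))
    omega
end

section
/- If the audience p is k-soluble, then r(p) = 0. -/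
lemma sum_tail_eq (k : ℕ) (p : ℕ → ℕ) (hp : ∀ j, k < j → p j = 0) {n : ℕ}
    (h : k + 1 ≤ n) : ∑ j ∈ Finset.range n, p j = ∑ j ∈ Finset.range (k + 1), p j := by
  refine (Finset.sum_subset (Finset.range_subset_range.2 h) ?_).symm
  intro j hj hj'
  simp only [Finset.mem_range, not_lt] at hj'
  exact hp j (by omega)

lemma sum_le_total (k : ℕ) (p : ℕ → ℕ) (hp : ∀ j, k < j → p j = 0) (n : ℕ) :
    ∑ j ∈ Finset.range n, p j ≤ ∑ j ∈ Finset.range (k + 1), p j := by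
  rcases le_or_gt n (k + 1) with h | h
  · exact Finset.sum_le_sum_of_subset (Finset.range_subset_range.2 h)
  · exact le_of_eq (sum_tail_eq k p hp h.le)

lemma applause_le (k : ℕ) (p : ℕ → ℕ) (hp : ∀ j, k < j → p j = 0) (t : ℕ) :
    applause p t ≤ ∑ j ∈ Finset.range (k + 1), p j := by
  cases t with
  | zero =>
    have : p 0 = ∑ j ∈ Finset.range 1, p j := by simp
    rw [applause, this]
    exact sum_le_total k p hp 1
  | succ t => rw [applause]; exact sum_le_total k p hp _

lemma applause_ge (k : ℕ) (p : ℕ → ℕ) (hp : ∀ j, k < j → p j = 0)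
    (hsol : Soluble k p) (t : ℕ) :
    min (t + 1) (∑ j ∈ Finset.range (k + 1), p j) ≤ applause p t := by
  set S := ∑ j ∈ Finset.range (k + 1), p j with hS
  induction t with
  | zero =>
    rcases Nat.eq_zero_or_pos k with hk | hk
    · subst hk
      rw [applause]
      have : S = p 0 := by simp [hS]
      omega
    · have h1 : 1 ≤ p 0 := by simpa using hsol 1 le_rfl hk
      rw [applause]; omega
  | succ t ih =>
    rcases le_or_gt S (applause p t) with h | h
    · -- applause p t = S, stays S
      have hkS : k ≤ S := by
        rcases Nat.eq_zero_or_pos k with hk | hk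
        · omega
        · calc k ≤ ∑ j ∈ Finset.range k, p j := hsol k hk le_rfl
            _ ≤ S := sum_le_total k p hp k
      have heq : applause p t = S := le_antisymm (applause_le k p hp t) h
      rw [applause, heq, sum_tail_eq k p hp (by omega)]
      omega
    · have hge : t + 1 ≤ applause p t := by omega
      rw [applause]
      rcases le_or_gt (applause p t + 1) k with h2 | h2
      · have := hsol (applause p t + 1) (by omega) h2
        omega
      · rw [sum_tail_eq k p hp (by omega)]
        omega

theorem stmt_6 (k : ℕ) (p : ℕ → ℕ) (hp : ∀ j, k < j → p j = 0)
    (hsol : Soluble k p) : ovationNumber k p = 0 := by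
  have h0 : (0 : ℕ) ∈ {n : ℕ | ∃ q : ℕ → ℕ, (∀ j, k < j → q j = 0) ∧
      (∑ j ∈ Finset.range (k + 1), q j) = n ∧
      StandingOvation k (fun j => p j + q j)} := by
    refine ⟨fun _ => 0, fun _ _ => rfl, by simp, ?_⟩
    have hpp : (fun j => p j + 0) = p := by funext j; simp
    rw [show (fun j => p j + (fun _ => (0:ℕ)) j) = p from by funext j; simp]
    set S := ∑ j ∈ Finset.range (k + 1), p j with hS
    refine ⟨S, le_antisymm (applause_le k p hp S) ?_⟩
    have := applause_ge k p hp hsol S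
    omega
  simp only [ovationNumber]
  exact Nat.sInf_eq_zero.2 (Or.inl h0)
end

section
/- For every audience p supported on [0, k], one has r(p) ≤ k. -/
theorem stmt_8 (k : ℕ) (p : ℕ → ℕ) (hp : ∀ j, k < j → p j = 0) :
    ovationNumber k p ≤ k := by
  apply Nat.sInf_le
  refine ⟨fun j => if j = 0 then k else 0, ?_, ?_, ?_⟩
  · intro j hj
    simp only [ite_eq_right_iff]
    omega
  · simp [Finset.sum_ite_eq']
  · set P := fun j => p j + if j = 0 then k else 0 with hP
    refine ⟨1, ?_⟩
    have h0 : applause P 0 = p 0 + k := by simp [applause, hP]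
    show ∑ j ∈ Finset.range (applause P 0 + 1), P j = _
    rw [h0]
    refine (Finset.sum_subset (Finset.range_subset_range.2 (by omega)) ?_).symm
    intro x hx hx'
    simp only [Finset.mem_range, not_lt] at hx'
    have hk : k < x := by omega
    simp only [hP, hp x hk, Nat.zero_add, ite_eq_right_iff]
    omega
end

section
/- Let m = max_{1 ≤ s ≤ k} max(0, s − ∑_{j=0}^{s-1} p j) (with m = 0 if k = 0). Then the audience p + m·δ₀ obtained from p by adding m spectators of shyness level 0 is k-soluble, and hence produces a standing ovation. -/
lemma ovation_of_soluble (k : ℕ) (q : ℕ → ℕ) (hq : ∀ j, k < j → q j = 0)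
    (hs : Soluble k q) : StandingOvation k q := by
  have key : ∀ t, min t k ≤ applause q t := by
    intro t
    induction t with
    | zero => simp
    | succ t ih =>
      simp only [applause]
      by_cases hk : k ≤ applause q t
      · have h1 : ∑ j ∈ Finset.range (k + 1), q j ≤
            ∑ j ∈ Finset.range (applause q t + 1), q j :=
          Finset.sum_le_sum_of_subset (Finset.range_subset_range.2 (by omega))
        rcases Nat.eq_zero_or_pos k with hk0 | hk1
        · simp [hk0]
        · have h2 : k ≤ ∑ j ∈ Finset.range k, q j := hs k hk1 le_rfl
          have h3 : ∑ j ∈ Finset.range k, q j ≤ ∑ j ∈ Finset.range (k + 1), q j :=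
            Finset.sum_le_sum_of_subset (Finset.range_subset_range.2 (by omega))
          have h4 : min (t + 1) k ≤ k := min_le_right _ _
          omega
      · push_neg at hk
        have ht : t < k := by
          rcases le_or_gt k t with h | h
          · rw [min_eq_right h] at ih; omega
          · exact h
        rw [min_eq_left (by omega)] at ih
        have h1 : applause q t + 1 ≤ ∑ j ∈ Finset.range (applause q t + 1), q j :=
          hs _ (by omega) (by omega)
        have h4 : min (t + 1) k ≤ t + 1 := min_le_left _ _
        omega
  refine ⟨k + 1, ?_⟩
  have hk : k ≤ applause q k := by have := key k; simpa using this
  simp only [applause]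
  exact (Finset.sum_subset (Finset.range_subset_range.2 (by omega))
    (fun x _ hx => hq x (by simpa using hx))).symm

theorem stmt_10 (k : ℕ) (p : ℕ → ℕ) (hp : ∀ j, k < j → p j = 0)
    (m : ℕ) (hm : m = (Finset.Icc 1 k).sup (fun s => s - ∑ j ∈ Finset.range s, p j)) :
    Soluble k (fun j => p j + if j = 0 then m else 0) ∧
      StandingOvation k (fun j => p j + if j = 0 then m else 0) := by
  set q : ℕ → ℕ := fun j => p j + if j = 0 then m else 0 with hq
  have hsol : Soluble k q := by
    intro s' h1 h2
    have hsum : ∑ j ∈ Finset.range s', q j = (∑ j ∈ Finset.range s', p j) + m := by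
      simp only [hq, Finset.sum_add_distrib]
      congr 1
      rw [Finset.sum_ite_eq' (Finset.range s') 0 (fun _ => m),
        if_pos (Finset.mem_range.2 (by omega))]
    have hle : s' - ∑ j ∈ Finset.range s', p j ≤ m := by
      rw [hm]
      exact Finset.le_sup (f := fun s => s - ∑ j ∈ Finset.range s, p j) (Finset.mem_Icc.2 ⟨h1, h2⟩)
    omega
  have hsupp : ∀ j, k < j → q j = 0 := by
    intro j hj
    simp only [hq]
    rw [hp j hj, if_neg (by omega)]
  exact ⟨hsol, ovation_of_soluble k q hsupp hsol⟩
end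

section
/- The bound r(p) ≤ k is attained: if p j = 0 for all j < k and p k ≥ 1, then r(p) = k. -/
theorem stmt_12 (k : ℕ) (p : ℕ → ℕ) (hp : ∀ j, k < j → p j = 0)
    (hlow : ∀ j, j < k → p j = 0) (hk : 1 ≤ p k) :
    ovationNumber k p = k := by
  have hmem : k ∈ {n : ℕ | ∃ q : ℕ → ℕ, (∀ j, k < j → q j = 0) ∧
      (∑ j ∈ Finset.range (k + 1), q j) = n ∧
      StandingOvation k (fun j => p j + q j)} := by
    refine ⟨fun j => if j = 0 then k else 0, ?_, ?_, ?_⟩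
    · intro j hj
      have : j ≠ 0 := by omega
      simp [this]
    · rw [Finset.sum_eq_single 0]
      · simp
      · intro b _ hb; simp [hb]
      · intro h; exact absurd (Finset.mem_range.mpr (Nat.succ_pos k)) h
    · refine ⟨1, ?_⟩
      have h0 : applause (fun j => p j + if j = 0 then k else 0) 0 =
          p 0 + k := by simp [applause]
      show (∑ j ∈ Finset.range (applause (fun j => p j + if j = 0 then k else 0) 0 + 1),
          (p j + if j = 0 then k else 0)) = _
      rw [h0]
      refine (Finset.sum_subset ?_ ?_).symm
      · exact Finset.range_subset_range.mpr (by omega)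
      · intro j hj hjn
        have : k < j := by
          simp only [Finset.mem_range] at hjn; omega
        have hj0 : j ≠ 0 := by omega
        simp [hp j this, hj0]
  refine le_antisymm (Nat.sInf_le hmem) (le_csInf ⟨k, hmem⟩ ?_)
  rintro n ⟨q, hq0, hqsum, t, ht⟩
  by_contra hn
  push_neg at hn
  have hkpos : 0 < k := lt_of_le_of_lt (Nat.zero_le n) hn
  -- key invariant: applause stays ≤ n
  have key : ∀ m, m ≤ k → (∑ j ∈ Finset.range m, (p j + q j)) ≤ n := by
    intro m hm
    have h1 : (∑ j ∈ Finset.range m, (p j + q j)) = ∑ j ∈ Finset.range m, q j := by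
      refine Finset.sum_congr rfl ?_
      intro j hj
      rw [hlow j (lt_of_lt_of_le (Finset.mem_range.mp hj) hm)]
      omega
    rw [h1, ← hqsum]
    exact Finset.sum_le_sum_of_subset (Finset.range_subset_range.mpr (by omega))
  have inv : ∀ s, applause (fun j => p j + q j) s ≤ n := by
    intro s
    induction s with
    | zero =>
        show p 0 + q 0 ≤ n
        have := key 1 hkpos
        simpa using this
    | succ s ih =>
        show (∑ j ∈ Finset.range (applause (fun j => p j + q j) s + 1),
            (p j + q j)) ≤ n
        exact key _ (by omega)
  have htot : n < ∑ j ∈ Finset.range (k + 1), (p j + q j) := by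
    rw [Finset.sum_add_distrib, hqsum]
    have : p k ≤ ∑ j ∈ Finset.range (k + 1), p j :=
      Finset.single_le_sum (fun i _ => Nat.zero_le _) (Finset.self_mem_range_succ k)
    omega
  have h2 := inv t
  simp only [] at ht
  omega
end

section
/- The minimum in the definition of r(p) is achieved using only friends of shyness level 0: there exists q : ℕ → ℕ with q 0 = r(p) and q j = 0 for all j ≥ 1 such that a standing ovation occurs for the audience p + q. -/
lemma sum_range_le_of_supported (k : ℕ) (p : ℕ → ℕ) (hp : ∀ j, k < j → p j = 0)
    (M : ℕ) : ∑ j ∈ Finset.range M, p j ≤ ∑ j ∈ Finset.range (k + 1), p j := by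
  rcases le_or_gt M (k + 1) with h | h
  · exact Finset.sum_le_sum_of_subset (Finset.range_subset_range.2 h)
  · refine le_of_eq (Finset.sum_subset (Finset.range_subset_range.2 h.le) ?_).symm
    intro x hx hx'
    exact hp x (by simpa using hx')

theorem stmt_13 (k : ℕ) (p : ℕ → ℕ) (hp : ∀ j, k < j → p j = 0) :
    ∃ q : ℕ → ℕ, q 0 = ovationNumber k p ∧ (∀ j, 1 ≤ j → q j = 0) ∧
      StandingOvation k (fun j => p j + q j) := by
  set S : Set ℕ := {n : ℕ | ∃ q : ℕ → ℕ, (∀ j, k < j → q j = 0) ∧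
    (∑ j ∈ Finset.range (k + 1), q j) = n ∧
    StandingOvation k (fun j => p j + q j)} with hS
  -- nonemptiness: invite k+1 friends of shyness 0
  have hne : S.Nonempty := by
    refine ⟨k + 1, fun j => if j = 0 then k + 1 else 0, ?_, ?_, ?_⟩
    · intro j hj; have h : j ≠ 0 := (by omega); exact if_neg h
    · simp
    · refine ⟨1, ?_⟩
      show ∑ j ∈ Finset.range (applause _ 0 + 1), _ = _
      have h0 : applause (fun j => p j + if j = 0 then k + 1 else 0) 0
          = p 0 + (k + 1) := by simp [applause]
      rw [h0]
      refine (Finset.sum_subset (Finset.range_subset_range.2 (by omega)) ?_).symm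
      intro x hx hx'
      have hxk : k < x := by simpa using hx'
      have : x ≠ 0 := by omega
      simp [hp x hxk, this]
  have hmem : ovationNumber k p ∈ S := Nat.sInf_mem hne
  obtain ⟨q, hq0, hqsum, t, ht⟩ := hmem
  set m := ovationNumber k p with hm
  refine ⟨fun j => if j = 0 then m else 0, by simp, fun j hj => by have h : j ≠ 0 := (by omega); exact if_neg h, ?_⟩
  set q' : ℕ → ℕ := fun j => if j = 0 then m else 0 with hq'
  have hq'sum : ∀ M, 1 ≤ M → ∑ j ∈ Finset.range M, q' j = m := by
    intro M hM
    simp [hq', Finset.sum_ite_eq', Finset.mem_range, Nat.lt_of_lt_of_le Nat.zero_lt_one hM]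
  have hqle : ∀ M, ∑ j ∈ Finset.range M, q j ≤ m :=
    fun M => hqsum ▸ sum_range_le_of_supported k q hq0 M
  -- monotone comparison
  have hcomp : ∀ s, applause (fun j => p j + q j) s ≤ applause (fun j => p j + q' j) s := by
    intro s
    induction s with
    | zero =>
      show p 0 + q 0 ≤ p 0 + q' 0
      simp only [hq', if_pos rfl]
      exact Nat.add_le_add_left (by simpa using hqle 1) _
    | succ s ih =>
      show ∑ j ∈ Finset.range (applause (fun j => p j + q j) s + 1), (p j + q j)
          ≤ ∑ j ∈ Finset.range (applause (fun j => p j + q' j) s + 1), (p j + q' j)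
      rw [Finset.sum_add_distrib, Finset.sum_add_distrib,
        hq'sum _ (Nat.succ_le_succ (Nat.zero_le _))]
      refine Nat.add_le_add ?_ (hqle _)
      exact Finset.sum_le_sum_of_subset (Finset.range_subset_range.2 (by omega))
  -- upper bound
  have hub : ∀ s, applause (fun j => p j + q' j) s ≤ (∑ j ∈ Finset.range (k + 1), p j) + m := by
    intro s
    cases s with
    | zero =>
      show p 0 + q' 0 ≤ _
      simp only [hq', if_pos rfl]
      exact Nat.add_le_add_right (by simpa using sum_range_le_of_supported k p hp 1) _
    | succ s =>
      show ∑ j ∈ Finset.range (applause (fun j => p j + q' j) s + 1), (p j + q' j) ≤ _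
      rw [Finset.sum_add_distrib, hq'sum _ (Nat.succ_le_succ (Nat.zero_le _))]
      exact Nat.add_le_add_right (sum_range_le_of_supported k p hp _) _
  have htot : ∑ j ∈ Finset.range (k + 1), (p j + q' j)
      = (∑ j ∈ Finset.range (k + 1), p j) + m := by
    rw [Finset.sum_add_distrib, hq'sum _ (Nat.succ_le_succ (Nat.zero_le _))]
  have htq : ∑ j ∈ Finset.range (k + 1), (p j + q j)
      = (∑ j ∈ Finset.range (k + 1), p j) + m := by
    rw [Finset.sum_add_distrib, hqsum]
  refine ⟨t, le_antisymm (htot ▸ hub t) ?_⟩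
  calc ∑ j ∈ Finset.range (k + 1), (p j + q' j)
      = ∑ j ∈ Finset.range (k + 1), (p j + q j) := by rw [htot, htq]
    _ = applause (fun j => p j + q j) t := ht.symm
    _ ≤ applause (fun j => p j + q' j) t := hcomp t
end
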